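/- Every G_M-invariant holomorphic 1-form on ℍ × ℂⁿ vanishes. Precisely: let L : ℂ × ℂⁿ → ℂ × ℂⁿ be the ℂ-linear map L(w, z) = (α w, Rᵀ z), and let F : ℍ × ℂⁿ → (ℂ × ℂⁿ →_ℂ ℂ) be a holomorphic map into the space of ℂ-linear functionals such that F(p + u_i) = F(p) for all p ∈ ℍ × ℂⁿ and all i ∈ {1, …, 2n+1}, and F(L(p)) ∘ L = F(p) for all p ∈ ℍ × ℂⁿ. Then F(p) = 0 for all p ∈ ℍ × ℂⁿ. -/

import Mathlib

open Matrix Polynomial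

/-- The translation vectors `uᵢ = (a⁽ⁱ⁾, b₁⁽ⁱ⁾, …, bₙ⁽ⁱ⁾) ∈ ℂ × ℂⁿ`. -/
def inoueU (n : ℕ) (a : Fin (2*n+1) → ℝ) (b : Fin n → (Fin (2*n+1) → ℂ))
    (i : Fin (2*n+1)) : ℂ × (Fin n → ℂ) :=
  ((a i : ℂ), fun j => b j i)

lemma disjoint_biSup_biSup {V : Type*} [AddCommGroup V] [Module ℂ V]
    {t : ℂ → Submodule ℂ V} (ht : iSupIndep t) {s₁ s₂ : Set ℂ}
    (hs : ∀ x ∈ s₁, x ∉ s₂) :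
    Disjoint (⨆ μ ∈ s₁, t μ) (⨆ μ ∈ s₂, t μ) := by
  rw [Submodule.disjoint_def]
  intro x h1 h2
  rw [iSup_subtype'] at h1
  rw [Submodule.mem_iSup_iff_exists_finsupp] at h1
  obtain ⟨fc, hmem, hsum⟩ := h1
  have hsum' : ∑ j ∈ fc.support, fc j = x := hsum
  have hzero : ∀ i ∈ fc.support, fc i = 0 := by
    intro i hi
    have h3 : fc i = x - ∑ j ∈ fc.support.erase i, fc j := by
      rw [← hsum', ← Finset.add_sum_erase _ _ hi]; abel
    have hle : (⨆ μ ∈ s₂, t μ) ≤ ⨆ (j) (_ : j ≠ (i : ℂ)), t j := by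
      refine iSup₂_le fun μ hμ => ?_
      have : μ ≠ (i : ℂ) := by
        rintro rfl; exact hs _ i.2 hμ
      exact le_iSup₂ (f := fun (μ : ℂ) (_ : μ ≠ (i:ℂ)) => t μ) μ this
    have h4 : fc i ∈ ⨆ (j) (_ : j ≠ (i : ℂ)), t j := by
      rw [h3]
      refine Submodule.sub_mem _ (hle h2) (Submodule.sum_mem _ fun j hj => ?_)
      have hne : (j : ℂ) ≠ (i : ℂ) := fun h =>
        (Finset.mem_erase.mp hj).1 (Subtype.ext h)
      exact le_iSup₂ (f := fun (μ : ℂ) (_ : μ ≠ (i:ℂ)) => t μ) (j:ℂ) hne (hmem j)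
    have := (ht (i : ℂ)).le_bot ⟨hmem i, h4⟩
    simpa using this
  rw [← hsum']
  exact Finset.sum_eq_zero hzero

lemma conj_step {N : ℕ} (f : Module.End ℂ (Fin N → ℂ))
    (hf : ∀ x, f (fun i => (starRingEnd ℂ) (x i)) = fun i => (starRingEnd ℂ) (f x i))
    (μ : ℂ) (y : Fin N → ℂ) :
    (f - (starRingEnd ℂ) μ • 1) (fun i => (starRingEnd ℂ) (y i))
      = fun i => (starRingEnd ℂ) (((f - μ • 1) y) i) := by
  funext i
  simp only [LinearMap.sub_apply, LinearMap.smul_apply, Module.End.one_apply, Pi.sub_apply,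
    Pi.smul_apply, smul_eq_mul, hf y, map_sub]
  rw [RingHom.map_mul]

lemma conj_pow_apply {N : ℕ} (f : Module.End ℂ (Fin N → ℂ))
    (hf : ∀ x, f (fun i => (starRingEnd ℂ) (x i)) = fun i => (starRingEnd ℂ) (f x i))
    (μ : ℂ) (k : ℕ) (x : Fin N → ℂ) :
    ((f - (starRingEnd ℂ) μ • 1) ^ k) (fun i => (starRingEnd ℂ) (x i))
      = fun i => (starRingEnd ℂ) ((((f - μ • 1) ^ k) x) i) := by
  induction k with
  | zero => simp
  | succ k ih =>
    rw [pow_succ', pow_succ', Module.End.mul_apply, Module.End.mul_apply, ih,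
      conj_step f hf μ]

lemma conj_mem_maxGen {N : ℕ} (f : Module.End ℂ (Fin N → ℂ))
    (hf : ∀ x, f (fun i => (starRingEnd ℂ) (x i)) = fun i => (starRingEnd ℂ) (f x i))
    {μ : ℂ} {x : Fin N → ℂ} (hx : x ∈ f.maxGenEigenspace μ) :
    (fun i => (starRingEnd ℂ) (x i)) ∈ f.maxGenEigenspace ((starRingEnd ℂ) μ) := by
  rw [Module.End.mem_maxGenEigenspace] at hx ⊢
  obtain ⟨k, hk⟩ := hx
  exact ⟨k, by rw [conj_pow_apply f hf, hk]; funext i; simp⟩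

lemma conj_mem_iSup_maxGen {N n : ℕ} (f : Module.End ℂ (Fin N → ℂ))
    (hf : ∀ x, f (fun i => (starRingEnd ℂ) (x i)) = fun i => (starRingEnd ℂ) (f x i))
    (β : Fin n → ℂ) {x : Fin N → ℂ}
    (hx : x ∈ ⨆ i, f.maxGenEigenspace (β i)) :
    (fun i => (starRingEnd ℂ) (x i)) ∈ ⨆ i, f.maxGenEigenspace ((starRingEnd ℂ) (β i)) := by
  have h0 : (fun i : Fin N => (starRingEnd ℂ) ((0 : Fin N → ℂ) i)) = 0 := by funext i; simp
  refine Submodule.iSup_induction (motive := fun y =>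
      (fun i => (starRingEnd ℂ) (y i)) ∈ ⨆ i, f.maxGenEigenspace ((starRingEnd ℂ) (β i)))
    _ hx (fun j y hy => ?_) (show (fun i => (starRingEnd ℂ) ((0:Fin N → ℂ) i)) ∈ _ by rw [h0]; exact Submodule.zero_mem _) (fun y z hy hz => ?_)
  · exact Submodule.mem_iSup_of_mem j (conj_mem_maxGen f hf hy)
  · have heq : (fun i => (starRingEnd ℂ) ((y + z) i))
        = (fun i => (starRingEnd ℂ) (y i)) + (fun i => (starRingEnd ℂ) (z i)) := by
      funext i; simp
    show (fun i => (starRingEnd ℂ) ((y + z) i)) ∈ _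
    rw [heq]; exact Submodule.add_mem _ hy hz

lemma inoue_real_span (n : ℕ)
    (f : Module.End ℂ (Fin (2*n+1) → ℂ))
    (hf : ∀ x, f (fun i => (starRingEnd ℂ) (x i)) = fun i => (starRingEnd ℂ) (f x i))
    (α : ℝ) (a : Fin (2*n+1) → ℝ) (ha0 : a ≠ 0)
    (ha : f (fun i => (a i : ℂ)) = (α : ℂ) • (fun i => (a i : ℂ)))
    (β : Fin n → ℂ) (hβ : ∀ j, 0 < (β j).im)
    (b : Fin n → Fin (2*n+1) → ℂ)
    (hbmem : ∀ j, b j ∈ ⨆ i, f.maxGenEigenspace (β i))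
    (hbind : LinearIndependent ℂ b) :
    ∀ (t : ℝ) (z : Fin n → ℂ), ∃ x : Fin (2*n+1) → ℝ,
      (∑ i, (a i : ℂ) * (x i : ℂ) = (t : ℂ)) ∧
      (∀ j, ∑ i, b j i * (x i : ℂ) = z j) := by
  classical
  set aC : Fin (2*n+1) → ℂ := fun i => (a i : ℂ) with haC_def
  set cb : Fin n → Fin (2*n+1) → ℂ := fun j i => (starRingEnd ℂ) (b j i) with hcb_def
  have haCne : aC ≠ 0 := by
    intro h
    apply ha0
    funext i
    have := congrFun h i
    simpa [haC_def] using this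
  have haCmem : aC ∈ f.maxGenEigenspace ((α : ℂ)) := by
    rw [Module.End.mem_maxGenEigenspace]
    refine ⟨1, ?_⟩
    rw [pow_one]
    simp only [LinearMap.sub_apply, LinearMap.smul_apply, Module.End.one_apply]
    rw [ha]; simp
  have hcbmem : ∀ j, cb j ∈ ⨆ i, f.maxGenEigenspace ((starRingEnd ℂ) (β i)) :=
    fun j => conj_mem_iSup_maxGen f hf β (hbmem j)
  -- ranges
  set S₁ : Set ℂ := Set.range β with hS₁
  set S₂ : Set ℂ := Set.range (fun j => (starRingEnd ℂ) (β j)) with hS₂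
  have hW1 : (⨆ i, f.maxGenEigenspace (β i)) ≤ ⨆ μ ∈ S₁, f.maxGenEigenspace μ :=
    iSup_le fun j => le_iSup₂ (f := fun μ (_ : μ ∈ S₁) => f.maxGenEigenspace μ) (β j) ⟨j, rfl⟩
  have hW2 : (⨆ i, f.maxGenEigenspace ((starRingEnd ℂ) (β i)))
      ≤ ⨆ μ ∈ S₂, f.maxGenEigenspace μ :=
    iSup_le fun j => le_iSup₂ (f := fun μ (_ : μ ∈ S₂) => f.maxGenEigenspace μ)
      ((starRingEnd ℂ) (β j)) ⟨j, rfl⟩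
  have hind := Module.End.independent_maxGenEigenspace f
  have hS12 : ∀ x ∈ S₁, x ∉ S₂ := by
    rintro x ⟨j, rfl⟩ ⟨k, hk⟩
    have h1 : 0 < (β j).im := hβ j
    have h2 : ((starRingEnd ℂ) (β k)).im = -(β k).im := Complex.conj_im _
    simp only at hk
    rw [← hk, h2] at h1
    linarith [hβ k]
  have hαS : ((α : ℝ) : ℂ) ∉ S₁ ∪ S₂ := by
    rintro (⟨j, hj⟩ | ⟨j, hj⟩)
    · have := congrArg Complex.im hj
      simp only [Complex.ofReal_im] at this
      linarith [hβ j]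
    · have := congrArg Complex.im hj
      simp only [Complex.conj_im, Complex.ofReal_im] at this
      linarith [hβ j]
  -- conjugated independence
  have hcbind : LinearIndependent ℂ cb := by
    rw [Fintype.linearIndependent_iff] at hbind ⊢
    intro e he
    have he' : ∀ i, ∑ j, e j * (starRingEnd ℂ) (b j i) = 0 := by
      intro i
      have := congrFun he i
      simpa [hcb_def] using this
    have hb0 : ∑ j, (starRingEnd ℂ) (e j) • b j = 0 := by
      funext i
      have := congrArg (starRingEnd ℂ) (he' i)
      simpa [map_sum] using this
    intro j
    have := hbind (fun j => (starRingEnd ℂ) (e j)) hb0 j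
    simpa using this
  -- combined independence
  set v : (Fin 1 ⊕ (Fin n ⊕ Fin n)) → (Fin (2*n+1) → ℂ) :=
    Sum.elim (fun _ => aC) (Sum.elim b cb) with hv
  have hvind : LinearIndependent ℂ v := by
    rw [Fintype.linearIndependent_iff]
    intro g hg
    rw [Fintype.sum_sum_type, Fintype.sum_sum_type] at hg
    set xW : Fin (2*n+1) → ℂ := ∑ j, g (Sum.inr (Sum.inl j)) • b j with hxW
    set xC : Fin (2*n+1) → ℂ := ∑ j, g (Sum.inr (Sum.inr j)) • cb j with hxC
    have hgE : ∑ i : Fin 1, g (Sum.inl i) • v (Sum.inl i) = g (Sum.inl 0) • aC := by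
      rw [Fin.sum_univ_one]; rfl
    have hg' : g (Sum.inl 0) • aC + (xW + xC) = 0 := by
      rw [← hgE]; exact hg
    have hxWmem : xW ∈ ⨆ μ ∈ S₁, f.maxGenEigenspace μ :=
      Submodule.sum_mem _ fun j _ => Submodule.smul_mem _ _ (hW1 (hbmem j))
    have hxCmem : xC ∈ ⨆ μ ∈ S₂, f.maxGenEigenspace μ :=
      Submodule.sum_mem _ fun j _ => Submodule.smul_mem _ _ (hW2 (hcbmem j))
    have hdisjE : Disjoint (f.maxGenEigenspace ((α:ℝ):ℂ))
        (⨆ μ ∈ S₁ ∪ S₂, f.maxGenEigenspace μ) := hind.disjoint_biSup hαS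
    have hE0 : g (Sum.inl 0) • aC = 0 := by
      have hm1 : g (Sum.inl 0) • aC ∈ f.maxGenEigenspace ((α:ℝ):ℂ) :=
        Submodule.smul_mem _ _ haCmem
      have hm2 : g (Sum.inl 0) • aC ∈ ⨆ μ ∈ S₁ ∪ S₂, f.maxGenEigenspace μ := by
        have : g (Sum.inl 0) • aC = -(xW + xC) := by
          rw [eq_neg_iff_add_eq_zero]; exact hg'
        rw [this]
        refine Submodule.neg_mem _ (Submodule.add_mem _ ?_ ?_)
        · have hle : (⨆ μ ∈ S₁, f.maxGenEigenspace μ) ≤ ⨆ μ ∈ S₁ ∪ S₂, f.maxGenEigenspace μ :=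
            biSup_mono (fun μ hμ => Set.mem_union_left _ hμ)
          exact hle hxWmem
        · have hle : (⨆ μ ∈ S₂, f.maxGenEigenspace μ) ≤ ⨆ μ ∈ S₁ ∪ S₂, f.maxGenEigenspace μ :=
            biSup_mono (fun μ hμ => Set.mem_union_right _ hμ)
          exact hle hxCmem
      exact (Submodule.disjoint_def.mp hdisjE) _ hm1 hm2
    have hWC : xW = -xC := by
      have h' : xW + xC = 0 := by
        have := hg'
        rw [hE0, zero_add] at this
        exact this
      rw [eq_neg_iff_add_eq_zero]; exact h'
    have hdisjWC : Disjoint (⨆ μ ∈ S₁, f.maxGenEigenspace μ)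
        (⨆ μ ∈ S₂, f.maxGenEigenspace μ) := disjoint_biSup_biSup hind hS12
    have hxW0 : xW = 0 := by
      refine (Submodule.disjoint_def.mp hdisjWC) _ hxWmem ?_
      rw [hWC]; exact Submodule.neg_mem _ hxCmem
    have hxC0 : xC = 0 := by
      rw [hxW0] at hWC
      simpa using hWC.symm
    have hdW : ∀ j, g (Sum.inr (Sum.inl j)) = 0 :=
      Fintype.linearIndependent_iff.mp hbind _ hxW0
    have hdC : ∀ j, g (Sum.inr (Sum.inr j)) = 0 :=
      Fintype.linearIndependent_iff.mp hcbind _ hxC0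
    have hc0 : g (Sum.inl 0) = 0 := by
      rcases smul_eq_zero.mp hE0 with h | h
      · exact h
      · exact absurd h haCne
    rintro (i | (j | j))
    · have : i = 0 := Subsingleton.elim _ _
      rw [this]; exact hc0
    · exact hdW j
    · exact hdC j
  -- cardinality and basis
  have hcard : Fintype.card (Fin 1 ⊕ (Fin n ⊕ Fin n)) = Module.finrank ℂ (Fin (2*n+1) → ℂ) := by
    simp [Module.finrank_pi]
    ring
  let B := basisOfLinearIndependentOfCardEqFinrank hvind hcard
  have hBspan : Submodule.span ℂ (Set.range v) = ⊤ := by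
    have : ⇑B = v := coe_basisOfLinearIndependentOfCardEqFinrank hvind hcard
    rw [← this]
    exact B.span_eq
    -- the comparison linear map
  let Φ : (Fin (2*n+1) → ℂ) →ₗ[ℂ] (ℂ × (Fin n → ℂ) × (Fin n → ℂ)) :=
    { toFun := fun x => (∑ i, aC i * x i, fun j => ∑ i, b j i * x i,
        fun j => ∑ i, cb j i * x i)
      map_add' := by
        intro x y
        refine Prod.ext ?_ (Prod.ext ?_ ?_)
        · simp [mul_add, Finset.sum_add_distrib]
        · funext j; simp [mul_add, Finset.sum_add_distrib]
        · funext j; simp [mul_add, Finset.sum_add_distrib]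
      map_smul' := by
        intro c x
        refine Prod.ext ?_ (Prod.ext ?_ ?_)
        · simp [Finset.mul_sum]; ring_nf; simp [mul_comm, mul_left_comm]
        · funext j; simp [Finset.mul_sum]; ring_nf; simp [mul_comm, mul_left_comm]
        · funext j; simp [Finset.mul_sum]; ring_nf; simp [mul_comm, mul_left_comm] }
  have hΦinj : Function.Injective Φ := by
    rw [← LinearMap.ker_eq_bot, Submodule.eq_bot_iff]
    intro x hx
    rw [LinearMap.mem_ker] at hx
    have hx1 : ∑ i, aC i * x i = 0 := congrArg Prod.fst hx
    have hx2 : ∀ j, ∑ i, b j i * x i = 0 := fun j =>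
      congrFun (congrArg Prod.fst (congrArg Prod.snd hx)) j
    have hx3 : ∀ j, ∑ i, cb j i * x i = 0 := fun j =>
      congrFun (congrArg Prod.snd (congrArg Prod.snd hx)) j
    let D : Submodule ℂ (Fin (2*n+1) → ℂ) :=
      { carrier := {w | ∑ i, w i * x i = 0}
        add_mem' := by
          intro p q hp hq
          simp only [Set.mem_setOf_eq, Pi.add_apply, add_mul, Finset.sum_add_distrib] at *
          rw [hp, hq, add_zero]
        zero_mem' := by simp
        smul_mem' := by
          intro c p hp
          simp only [Set.mem_setOf_eq, Pi.smul_apply, smul_eq_mul, mul_assoc,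
            ← Finset.mul_sum] at *
          rw [hp, mul_zero] }
    have hvD : Set.range v ⊆ (D : Set (Fin (2*n+1) → ℂ)) := by
      rintro w ⟨(i | (j | j)), rfl⟩
      · exact hx1
      · exact hx2 j
      · exact hx3 j
    have hD : (⊤ : Submodule ℂ (Fin (2*n+1) → ℂ)) ≤ D := by
      rw [← hBspan]
      exact Submodule.span_le.mpr hvD
    funext i
    have hsingle : (Pi.single i 1 : Fin (2*n+1) → ℂ) ∈ D := hD trivial
    have : ∑ k, (Pi.single i 1 : Fin (2*n+1) → ℂ) k * x k = x i := by
      rw [Finset.sum_eq_single i]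
      · simp
      · intro k _ hk; simp [Pi.single_apply, hk]
      · intro h; exact absurd (Finset.mem_univ i) h
    have hx0 : x i = 0 := by rw [← this]; exact hsingle
    simpa using hx0
  have hrank : Module.finrank ℂ (Fin (2*n+1) → ℂ)
      = Module.finrank ℂ (ℂ × (Fin n → ℂ) × (Fin n → ℂ)) := by
    simp [Module.finrank_pi, Module.finrank_prod]
    ring
  have hΦsurj : Function.Surjective Φ :=
    (LinearMap.injective_iff_surjective_of_finrank_eq_finrank hrank).mp hΦinj
  intro t z
  obtain ⟨x, hx⟩ := hΦsurj ((t : ℂ), z, fun j => (starRingEnd ℂ) (z j))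
  have hx1 : ∑ i, aC i * x i = (t : ℂ) := by rw [show ∑ i, aC i * x i = (Φ x).1 from rfl, hx]
  have hx2 : ∀ j, ∑ i, b j i * x i = z j := fun j => by
    rw [show ∑ i, b j i * x i = (Φ x).2.1 j from rfl, hx]
  have hx3 : ∀ j, ∑ i, cb j i * x i = (starRingEnd ℂ) (z j) := fun j => by
    rw [show ∑ i, cb j i * x i = (Φ x).2.2 j from rfl, hx]
  -- x is conj-invariant
  have hconjx : (fun i => (starRingEnd ℂ) (x i)) = x := by
    apply hΦinj
    rw [hx]
    refine Prod.ext ?_ (Prod.ext ?_ ?_)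
    · show ∑ i, aC i * (starRingEnd ℂ) (x i) = (t : ℂ)
      have : ∀ i, aC i * (starRingEnd ℂ) (x i) = (starRingEnd ℂ) (aC i * x i) := by
        intro i
        rw [RingHom.map_mul, Complex.conj_ofReal]
      rw [Finset.sum_congr rfl fun i _ => this i, ← map_sum, hx1, Complex.conj_ofReal]
    · funext j
      show ∑ i, b j i * (starRingEnd ℂ) (x i) = z j
      have : ∀ i, b j i * (starRingEnd ℂ) (x i) = (starRingEnd ℂ) (cb j i * x i) := by
        intro i
        rw [RingHom.map_mul, hcb_def]
        simp
      rw [Finset.sum_congr rfl fun i _ => this i, ← map_sum, hx3 j]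
      simp
    · funext j
      show ∑ i, cb j i * (starRingEnd ℂ) (x i) = (starRingEnd ℂ) (z j)
      have : ∀ i, cb j i * (starRingEnd ℂ) (x i) = (starRingEnd ℂ) (b j i * x i) := by
        intro i
        rw [RingHom.map_mul, hcb_def]
      rw [Finset.sum_congr rfl fun i _ => this i, ← map_sum, hx2 j]
  refine ⟨fun i => (x i).re, ?_, ?_⟩
  · have hre : ∀ i, ((x i).re : ℂ) = x i := fun i =>
      Complex.conj_eq_iff_re.mp (congrFun hconjx i)
    rw [Finset.sum_congr rfl fun i _ => by rw [hre i]]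
    exact hx1
  · intro j
    have hre : ∀ i, ((x i).re : ℂ) = x i := fun i =>
      Complex.conj_eq_iff_re.mp (congrFun hconjx i)
    rw [Finset.sum_congr rfl fun i _ => by rw [hre i]]
    exact hx2 j

lemma inoue_R_no_fixed {N n : ℕ} (f : Module.End ℂ (Fin N → ℂ))
    (β : Fin n → ℂ) (hβ : ∀ j, 0 < (β j).im)
    (b : Fin n → Fin N → ℂ)
    (hbmem : ∀ j, b j ∈ ⨆ i, f.maxGenEigenspace (β i))
    (hbind : LinearIndependent ℂ b)
    (R : Matrix (Fin n) (Fin n) ℂ)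
    (hR : ∀ j, f (b j) = ∑ ℓ, R ℓ j • b ℓ)
    (d : Fin n → ℂ) (hd : R.mulVec d = d) : d = 0 := by
  classical
  set x : Fin N → ℂ := ∑ j, d j • b j with hx
  have hdl : ∀ ℓ, ∑ j, R ℓ j * d j = d ℓ := by
    intro ℓ
    have := congrFun hd ℓ
    simpa [Matrix.mulVec, dotProduct] using this
  have hfx : f x = x := by
    rw [hx, map_sum]
    simp_rw [_root_.map_smul, hR, Finset.smul_sum, smul_smul]
    rw [Finset.sum_comm]
    have : ∀ ℓ, ∑ j, (d j * R ℓ j) • b ℓ = d ℓ • b ℓ := by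
      intro ℓ
      rw [← Finset.sum_smul]
      congr 1
      rw [← hdl ℓ]
      exact Finset.sum_congr rfl fun j _ => mul_comm _ _
    exact Finset.sum_congr rfl fun ℓ _ => this ℓ
  have hxmem1 : x ∈ f.maxGenEigenspace 1 := by
    rw [Module.End.mem_maxGenEigenspace]
    refine ⟨1, ?_⟩
    rw [pow_one]
    simp [hfx]
  have hxmem2 : x ∈ ⨆ μ ∈ Set.range β, f.maxGenEigenspace μ := by
    have hle : (⨆ i, f.maxGenEigenspace (β i)) ≤ ⨆ μ ∈ Set.range β, f.maxGenEigenspace μ :=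
      iSup_le fun j => le_iSup₂ (f := fun μ (_ : μ ∈ Set.range β) => f.maxGenEigenspace μ)
        (β j) ⟨j, rfl⟩
    exact hle (Submodule.sum_mem _ fun j _ => Submodule.smul_mem _ _ (hbmem j))
  have h1β : (1 : ℂ) ∉ Set.range β := by
    rintro ⟨j, hj⟩
    have := congrArg Complex.im hj
    simp only [Complex.one_im] at this
    linarith [hβ j]
  have hx0 : x = 0 :=
    Submodule.disjoint_def.mp
      ((Module.End.independent_maxGenEigenspace f).disjoint_biSup h1β) x hxmem1 hxmem2
  funext j
  exact Fintype.linearIndependent_iff.mp hbind d hx0 j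

/-- **Proposition (Endo–Pajitnov)**.  There are no non-trivial `G_M`-invariant holomorphic
`1`-forms on `ℍ × ℂⁿ`.  Precisely: let `L(w, z) = (α w, Rᵀ z)` and let
`F : ℍ × ℂⁿ → (ℂ × ℂⁿ →_ℂ ℂ)` be a holomorphic family of `ℂ`-linear functionals such that
`F(p + uᵢ) = F(p)` for all `p` and `i` and `F(L(p)) ∘ L = F(p)` for all `p`.
Then `F ≡ 0` on `ℍ × ℂⁿ`. -/
theorem inoue_no_invariant_one_forms
    (n : ℕ) (hn : 1 ≤ n)
    (M : Matrix (Fin (2*n+1)) (Fin (2*n+1)) ℤ) (hdet : M.det = 1)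
    (α : ℝ) (hα0 : 0 < α) (hα1 : α ≠ 1) (hαirr : Irrational α)
    (β : Fin n → ℂ) (hβ : ∀ j, 0 < (β j).im)
    (hchar : (M.map (Int.cast : ℤ → ℂ)).charpoly
      = (X - C (α : ℂ)) * ∏ j, ((X - C (β j)) * (X - C (starRingEnd ℂ (β j)))))
    (a : Fin (2*n+1) → ℝ) (ha0 : a ≠ 0)
    (ha : (M.map (Int.cast : ℤ → ℝ)).mulVec a = α • a)
    (b : Fin n → (Fin (2*n+1) → ℂ))
    (hbmem : ∀ j, b j ∈ ⨆ i, Module.End.maxGenEigenspace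
        (Matrix.mulVecLin (M.map (Int.cast : ℤ → ℂ))) (β i))
    (hbind : LinearIndependent ℂ b)
    (hbspan : Submodule.span ℂ (Set.range b)
      = ⨆ i, Module.End.maxGenEigenspace
        (Matrix.mulVecLin (M.map (Int.cast : ℤ → ℂ))) (β i))
    (R : Matrix (Fin n) (Fin n) ℂ)
    (hR : ∀ j, (M.map (Int.cast : ℤ → ℂ)).mulVec (b j) = ∑ ℓ, R ℓ j • b ℓ)
    (L : (ℂ × (Fin n → ℂ)) →L[ℂ] (ℂ × (Fin n → ℂ)))
    (hL : ∀ p : ℂ × (Fin n → ℂ), L p = ((α : ℂ) * p.1, Rᵀ.mulVec p.2))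
    (F : ℂ × (Fin n → ℂ) → ((ℂ × (Fin n → ℂ)) →L[ℂ] ℂ))
    (hF : DifferentiableOn ℂ F {p : ℂ × (Fin n → ℂ) | 0 < p.1.im})
    (hFtrans : ∀ p ∈ {p : ℂ × (Fin n → ℂ) | 0 < p.1.im}, ∀ i : Fin (2*n+1),
      F (p + inoueU n a b i) = F p)
    (hFL : ∀ p ∈ {p : ℂ × (Fin n → ℂ) | 0 < p.1.im}, (F (L p)).comp L = F p) :
    ∀ p ∈ {p : ℂ × (Fin n → ℂ) | 0 < p.1.im}, F p = 0 := by
  classical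
  set H : Set (ℂ × (Fin n → ℂ)) := {p | 0 < p.1.im} with hHdef
  set u : Fin (2*n+1) → ℂ × (Fin n → ℂ) := inoueU n a b with hudef
  set f : Module.End ℂ (Fin (2*n+1) → ℂ) :=
    Matrix.mulVecLin (M.map (Int.cast : ℤ → ℂ)) with hfdef
  have HOpen : IsOpen H := by
    have : H = (fun p : ℂ × (Fin n → ℂ) => p.1) ⁻¹' {w : ℂ | 0 < w.im} := rfl
    rw [this]
    exact (isOpen_lt continuous_const Complex.continuous_im).preimage continuous_fst
    -- f commutes with conjugation
  have hfconj : ∀ x, f (fun i => (starRingEnd ℂ) (x i)) = fun i => (starRingEnd ℂ) (f x i) := by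
    intro x
    funext i
    simp only [hfdef, Matrix.mulVecLin_apply, Matrix.mulVec, dotProduct,
      Matrix.map_apply, map_sum, RingHom.map_mul, map_intCast]
  -- eigen equation over ℂ
  have ha' : f (fun i => (a i : ℂ)) = ((α : ℝ) : ℂ) • (fun i => (a i : ℂ)) := by
    funext i
    have := congrFun ha i
    simp only [Matrix.mulVec, dotProduct, Matrix.map_apply, Pi.smul_apply,
      smul_eq_mul] at this
    simp only [hfdef, Matrix.mulVecLin_apply, Matrix.mulVec, dotProduct,
      Matrix.map_apply, Pi.smul_apply, smul_eq_mul]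
    push_cast
    exact_mod_cast congrArg (Complex.ofReal) this
  -- first coordinates of u are real
  have hufst : ∀ (c : ℂ), c.im = 0 → ∀ i, (c • u i).1.im = 0 := by
    intro c hc i
    simp [hudef, inoueU, Complex.mul_im, hc]
  have hmemH : ∀ p ∈ H, ∀ (c : ℂ), c.im = 0 → ∀ i, p + c • u i ∈ H := by
    intro p hp c hc i
    have him : (p + c • u i).1.im = p.1.im := by
      simp only [Prod.fst_add, Complex.add_im, hufst c hc i, add_zero]
    simp only [hHdef, Set.mem_setOf_eq] at hp ⊢
    rw [him]
    exact hp
  -- translation invariance for integer multiples of a single generator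
  have hUtrans : ∀ (i : Fin (2*n+1)) (k : ℤ), ∀ p ∈ H, F (p + (k:ℂ) • u i) = F p := by
    intro i k
    induction k using Int.induction_on with
    | zero => intro p hp; simp
    | succ k ih =>
      intro p hp'
      have hmem : p + ((k:ℤ):ℂ) • u i ∈ H := hmemH p hp' _ (by simp) i
      have h1 : p + (((k:ℤ)+1:ℤ):ℂ) • u i = (p + ((k:ℤ):ℂ) • u i) + u i := by
        push_cast
        module
      rw [h1, hFtrans _ hmem i]
      exact ih p hp'
    | pred k ih =>
      intro p hp'
      have hmem : p + ((-(k:ℤ)-1:ℤ):ℂ) • u i ∈ H := hmemH p hp' _ (by simp) i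
      have h1 : (p + ((-(k:ℤ)-1:ℤ):ℂ) • u i) + u i = p + ((-(k:ℤ):ℤ):ℂ) • u i := by
        push_cast
        module
      have h2 := hFtrans _ hmem i
      rw [h1] at h2
      rw [← h2]
      exact ih p hp'
    -- translation invariance under the full lattice
  have hLat : ∀ (m : Fin (2*n+1) → ℤ), ∀ p ∈ H, F (p + ∑ i, ((m i : ℤ):ℂ) • u i) = F p := by
    intro m
    have key : ∀ s : Finset (Fin (2*n+1)), ∀ p ∈ H,
        F (p + ∑ i ∈ s, ((m i : ℤ):ℂ) • u i) = F p := by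
      intro s
      induction s using Finset.induction_on with
      | empty => intro p hp; simp
      | insert i s' hnot ih =>
        intro p hp
        rw [Finset.sum_insert hnot, ← add_assoc]
        have hmem : p + ((m i : ℤ):ℂ) • u i ∈ H := hmemH p hp _ (by simp) i
        rw [show p + ((m i : ℤ):ℂ) • u i + ∑ j ∈ s', ((m j : ℤ):ℂ) • u j
            = (p + ((m i : ℤ):ℂ) • u i) + ∑ j ∈ s', ((m j : ℤ):ℂ) • u j from rfl]
        rw [ih _ hmem]
        exact hUtrans i (m i) p hp
    exact fun p hp => key Finset.univ p hp
  -- real-coefficient lattice combinations preserve the height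
  have hsumim : ∀ (c : Fin (2*n+1) → ℂ), (∀ i, (c i).im = 0) →
      (∑ i, c i • u i).1.im = 0 := by
    intro c hc
    rw [Prod.fst_sum, Complex.im_sum]
    refine Finset.sum_eq_zero fun i _ => ?_
    exact hufst (c i) (hc i) i
  -- Step B : boundedness on horizontal slices
  have hbound : ∀ w₀ : ℂ, 0 < w₀.im → ∃ C : ℝ, ∀ z : Fin n → ℂ, ‖F (w₀, z)‖ ≤ C := by
    intro w₀ hw₀
    set base : ℂ × (Fin n → ℂ) := (((w₀.im : ℝ):ℂ) * Complex.I, 0) with hbase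
    set g : (Fin (2*n+1) → ℝ) → ℂ × (Fin n → ℂ) :=
      fun y => base + ∑ i, ((y i : ℝ):ℂ) • u i with hgdef
    have hgim : ∀ y, (g y).1.im = w₀.im := by
      intro y
      have h1 : (∑ i, ((y i : ℝ):ℂ) • u i).1.im = 0 :=
        hsumim _ (fun i => by simp)
      simp only [hgdef, Prod.fst_add, Complex.add_im, h1, add_zero, hbase]
      simp
    have hgH : ∀ y, g y ∈ H := by
      intro y
      simp only [hHdef, Set.mem_setOf_eq, hgim y]
      exact hw₀
    have hgcont : Continuous g := by
      refine continuous_const.add (continuous_finset_sum _ fun i _ => ?_)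
      exact ((Complex.continuous_ofReal.comp (continuous_apply i)).smul continuous_const)
    have hFg : ContinuousOn (fun y => F (g y)) (Set.Icc (0 : Fin (2*n+1) → ℝ) 1) :=
      hF.continuousOn.comp hgcont.continuousOn (fun y _ => hgH y)
    obtain ⟨C, hC⟩ := (isCompact_Icc (a := (0 : Fin (2*n+1) → ℝ)) (b := 1)).exists_bound_of_continuousOn hFg
    refine ⟨C, fun z => ?_⟩
    obtain ⟨x, hx1, hx2⟩ := inoue_real_span n f hfconj α a ha0 ha' β hβ b hbmem hbind w₀.re z
    set m : Fin (2*n+1) → ℤ := fun i => ⌊x i⌋ with hm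
    set y : Fin (2*n+1) → ℝ := fun i => Int.fract (x i) with hy
    have hymem : y ∈ Set.Icc (0 : Fin (2*n+1) → ℝ) 1 := by
      constructor
      · intro i; exact Int.fract_nonneg _
      · intro i; exact le_of_lt (Int.fract_lt_one _)
    have hxsplit : ∀ i, ((y i : ℝ):ℂ) + ((m i : ℤ):ℂ) = ((x i : ℝ):ℂ) := by
      intro i
      rw [hy, hm]
      push_cast
      rw [Int.fract]
      push_cast
      ring
    have hdecomp : (w₀, z) = g y + ∑ i, ((m i : ℤ):ℂ) • u i := by
      have hcomb : (∑ i, ((y i : ℝ):ℂ) • u i) + (∑ i, ((m i : ℤ):ℂ) • u i)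
          = ∑ i, ((x i : ℝ):ℂ) • u i := by
        rw [← Finset.sum_add_distrib]
        refine Finset.sum_congr rfl fun i _ => ?_
        rw [← add_smul, hxsplit i]
      have hsum1 : (∑ i, ((x i : ℝ):ℂ) • u i).1 = ((w₀.re : ℝ):ℂ) := by
        rw [Prod.fst_sum]
        rw [← hx1]
        refine Finset.sum_congr rfl fun i _ => ?_
        show ((x i : ℝ):ℂ) * (u i).1 = _
        rw [hudef]
        show ((x i : ℝ):ℂ) * ((a i : ℝ):ℂ) = ((a i : ℝ):ℂ) * ((x i : ℝ):ℂ)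
        ring
      have hsum2 : (∑ i, ((x i : ℝ):ℂ) • u i).2 = z := by
        rw [Prod.snd_sum]
        funext j
        have : (∑ i, (((x i : ℝ):ℂ) • u i).2) j = ∑ i, b j i * ((x i : ℝ):ℂ) := by
          rw [Finset.sum_apply]
          refine Finset.sum_congr rfl fun i _ => ?_
          show ((x i : ℝ):ℂ) * b j i = b j i * ((x i : ℝ):ℂ)
          ring
        rw [this, hx2 j]
      rw [hgdef, add_assoc, hcomb]
      refine Prod.ext ?_ ?_
      · show w₀ = base.1 + (∑ i, ((x i : ℝ):ℂ) • u i).1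
        rw [hsum1, hbase]
        show w₀ = ((w₀.im : ℝ):ℂ) * Complex.I + ((w₀.re : ℝ):ℂ)
        rw [add_comm, Complex.re_add_im]
      · show z = base.2 + (∑ i, ((x i : ℝ):ℂ) • u i).2
        rw [hsum2, hbase]
        show z = 0 + z
        rw [zero_add]
    have hinv := hLat m (g y) (hgH y)
    rw [← hdecomp] at hinv
    rw [hinv]
    exact hC y hymem
    -- Step C : z-independence (Liouville)
  have hzind : ∀ (w₀ : ℂ), 0 < w₀.im → ∀ z, F (w₀, z) = F (w₀, 0) := by
    intro w₀ hw₀ z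
    obtain ⟨C, hC⟩ := hbound w₀ hw₀
    have hdiff : Differentiable ℂ (fun z : Fin n → ℂ => F (w₀, z)) := by
      intro z'
      have hmem : ((w₀, z') : ℂ × (Fin n → ℂ)) ∈ H := hw₀
      have h1 : DifferentiableAt ℂ F (w₀, z') := hF.differentiableAt (HOpen.mem_nhds hmem)
      have h2 : DifferentiableAt ℂ (fun z : Fin n → ℂ => ((w₀, z) : ℂ × (Fin n → ℂ))) z' :=
        (differentiableAt_const _).prodMk differentiableAt_id
      exact h1.comp z' h2
    have hbdd : Bornology.IsBounded (Set.range (fun z : Fin n → ℂ => F (w₀, z))) := by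
      rw [isBounded_iff_forall_norm_le]
      exact ⟨C, by rintro x ⟨z', rfl⟩; exact hC z'⟩
    exact hdiff.apply_eq_apply_of_bounded hbdd z 0
  -- Step D : periodicity under all real horizontal translations
  have hper : ∀ (t : ℝ) (w : ℂ), 0 < w.im → F (w + (t:ℂ), 0) = F (w, 0) := by
    set S : AddSubgroup ℝ :=
      { carrier := {t : ℝ | ∀ w : ℂ, 0 < w.im → F (w + (t:ℂ), 0) = F (w, 0)}
        zero_mem' := by intro w hw; simp
        add_mem' := by
          intro s t hs ht w hw
          have h1 : (0:ℝ) < (w + (t:ℂ)).im := by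
            simpa using hw
          have hpt : w + ((s+t:ℝ):ℂ) = (w + (t:ℂ)) + (s:ℂ) := by push_cast; ring
          rw [hpt, hs _ h1, ht w hw]
        neg_mem' := by
          intro t ht w hw
          have h1 : (0:ℝ) < (w + ((-t:ℝ):ℂ)).im := by simpa using hw
          have h2 := ht _ h1
          have hpt : (w + ((-t:ℝ):ℂ)) + (t:ℂ) = w := by push_cast; ring
          rw [hpt] at h2
          exact h2.symm } with hSdef
    have hgen : ∀ i, a i ∈ S := by
      intro i
      intro w hw
      have him : (0:ℝ) < (w + ((a i : ℝ):ℂ)).im := by simpa using hw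
      have h1 : F (w + ((a i:ℝ):ℂ), (0 : Fin n → ℂ))
          = F (w + ((a i:ℝ):ℂ), fun j => b j i) := (hzind _ him _).symm
      have h2 : ((w, 0) : ℂ × (Fin n → ℂ)) + u i = (w + ((a i:ℝ):ℂ), fun j => b j i) := by
        rw [hudef]
        refine Prod.ext rfl ?_
        show (0 : Fin n → ℂ) + _ = _
        rw [zero_add]
        rfl
      have h3 := hFtrans ((w, 0) : ℂ × (Fin n → ℂ)) hw i
      rw [h2] at h3
      rw [h1, h3]
    have hSclosed : IsClosed (S : Set ℝ) := by
      have hrepr : (S : Set ℝ) = ⋂ (w : {w : ℂ // 0 < w.im}),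
          {t : ℝ | F ((w:ℂ) + (t:ℂ), 0) = F ((w:ℂ), 0)} := by
        ext t
        simp only [Set.mem_iInter, Set.mem_setOf_eq, SetLike.mem_coe]
        constructor
        · intro h w; exact h (w:ℂ) w.2
        · intro h w hw; exact h ⟨w, hw⟩
      rw [hrepr]
      refine isClosed_iInter fun w => ?_
      have hcont : Continuous (fun t : ℝ => F ((w:ℂ) + (t:ℂ), 0)) := by
        refine hF.continuousOn.comp_continuous ?_ ?_
        · exact ((continuous_const.add Complex.continuous_ofReal).prodMk continuous_const)
        · intro t
          show (0:ℝ) < _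
          simpa using w.2
      exact (isClosed_singleton (x := F ((w:ℂ), 0))).preimage hcont
    rcases S.dense_or_cyclic with hdense | ⟨c, hc⟩
    · intro t w hw
      have : t ∈ (S : Set ℝ) := by
        have h1 := hdense.closure_eq
        rw [hSclosed.closure_eq] at h1
        rw [h1]
        trivial
      exact this w hw
    · exfalso
      have hmemc : ∀ i, ∃ k : ℤ, k • c = a i := by
        intro i
        have : a i ∈ AddSubgroup.closure ({c} : Set ℝ) := hc ▸ hgen i
        exact AddSubgroup.mem_closure_singleton.mp this
      choose m hm using hmemc
      obtain ⟨i0, hi0⟩ := Function.ne_iff.mp ha0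
      have hc0 : c ≠ 0 := by
        intro h
        apply hi0
        rw [← hm i0, h, smul_zero]
        simp
      have hm0 : (m i0 : ℝ) ≠ 0 := by
        intro h
        apply hi0
        rw [← hm i0, zsmul_eq_mul, h, zero_mul]
        simp
      have heig := congrFun ha i0
      simp only [Matrix.mulVec, dotProduct, Matrix.map_apply, Pi.smul_apply,
        smul_eq_mul] at heig
      -- substitute a j = m j * c
      have heig' : (∑ j, ((M i0 j * m j : ℤ) : ℝ)) * c = (α * (m i0 : ℝ)) * c := by
        rw [Finset.sum_mul]
        have : ∀ j, ((M i0 j * m j : ℤ) : ℝ) * c = (M i0 j : ℝ) * a j := by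
          intro j
          rw [← hm j, zsmul_eq_mul]
          push_cast
          ring
        rw [Finset.sum_congr rfl fun j _ => this j, heig, ← hm i0, zsmul_eq_mul]
        ring
      have heq : ((∑ j, M i0 j * m j : ℤ) : ℝ) = α * (m i0 : ℝ) := by
        have := mul_right_cancel₀ hc0 heig'
        push_cast at this ⊢
        exact this
      apply hαirr
      refine ⟨((∑ j, M i0 j * m j : ℤ) : ℚ) / ((m i0 : ℤ) : ℚ), ?_⟩
      have : α = ((∑ j, M i0 j * m j : ℤ) : ℝ) / (m i0 : ℝ) := by
        field_simp at heq ⊢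
        linarith [heq]
      rw [this]
      push_cast
      ring
    -- Step E : F(w,0) is constant in w
  have hGconst : ∀ w : ℂ, 0 < w.im → F (w, 0) = F (Complex.I, 0) := by
    set U : Set ℂ := {w : ℂ | 0 < w.im} with hUdef
    have hUopen : IsOpen U := isOpen_lt continuous_const Complex.continuous_im
    have hGdiff : DifferentiableOn ℂ (fun w : ℂ => F (w, 0)) U := by
      intro w hw
      have h1 : DifferentiableAt ℂ F ((w, 0) : ℂ × (Fin n → ℂ)) :=
        hF.differentiableAt (HOpen.mem_nhds hw)
      have h2 : DifferentiableAt ℂ (fun w : ℂ => ((w, 0) : ℂ × (Fin n → ℂ))) w :=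
        differentiableAt_id.prodMk (differentiableAt_const _)
      exact (h1.comp w h2).differentiableWithinAt
    have hGanalytic := hGdiff.analyticOnNhd hUopen
    have hconstA : AnalyticOnNhd ℂ (fun _ : ℂ => F (Complex.I, (0 : Fin n → ℂ))) U :=
      analyticOnNhd_const
    have hpre : IsPreconnected U := (convex_halfSpace_im_gt (0:ℝ)).isPreconnected
    have hIU : Complex.I ∈ U := by
      simp only [hUdef, Set.mem_setOf_eq, Complex.I_im]
      norm_num
    have hfreq : ∃ᶠ w in nhdsWithin Complex.I {Complex.I}ᶜ,
        F (w, (0:Fin n → ℂ)) = F (Complex.I, (0:Fin n → ℂ)) := by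
      have htend : Filter.Tendsto (fun k : ℕ => Complex.I + ((1/(k+1 : ℝ) : ℝ) : ℂ))
          Filter.atTop (nhdsWithin Complex.I {Complex.I}ᶜ) := by
        rw [tendsto_nhdsWithin_iff]
        constructor
        · have h0 : Filter.Tendsto (fun k : ℕ => (1/(k+1 : ℝ) : ℝ)) Filter.atTop (nhds 0) :=
            tendsto_one_div_add_atTop_nhds_zero_nat
          have h1 : Filter.Tendsto (fun k : ℕ => ((1/(k+1 : ℝ) : ℝ) : ℂ)) Filter.atTop
              (nhds ((0:ℝ):ℂ)) := (Complex.continuous_ofReal.tendsto _).comp h0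
          have h2 := (tendsto_const_nhds (x := Complex.I) (f := Filter.atTop (α := ℕ))).add h1
          simpa using h2
        · refine Filter.Eventually.of_forall fun k => ?_
          simp only [Set.mem_compl_iff, Set.mem_singleton_iff]
          intro hcontra
          have h3 : ((1/(k+1 : ℝ) : ℝ) : ℂ) = 0 := by
            have := congrArg (fun w => w - Complex.I) hcontra
            simpa [add_sub_cancel_left] using this
          rw [Complex.ofReal_eq_zero] at h3
          have : (0:ℝ) < 1/(k+1 : ℝ) := by positivity
          linarith [h3 ▸ this]
      refine htend.frequently (Filter.Frequently.of_forall fun k => ?_)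
      exact hper (1/(k+1:ℝ)) Complex.I (by simp)
    have heq := hGanalytic.eqOn_of_preconnected_of_frequently_eq hconstA hpre hIU hfreq
    exact fun w hw => heq hw
  -- Step F : the constant functional vanishes
  have hImem : ((Complex.I, 0) : ℂ × (Fin n → ℂ)) ∈ H := by
    show (0:ℝ) < _
    simp
  have hcL : ∀ v : ℂ × (Fin n → ℂ),
      (F ((Complex.I, 0) : ℂ × (Fin n → ℂ))) (L v) = (F ((Complex.I, 0) : ℂ × (Fin n → ℂ))) v := by
    have h1 := hFL ((Complex.I, 0) : ℂ × (Fin n → ℂ)) hImem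
    have hLI : L ((Complex.I, 0) : ℂ × (Fin n → ℂ)) = ((α:ℂ) * Complex.I, 0) := by
      rw [hL]
      simp
    have him : 0 < ((α:ℂ) * Complex.I).im := by
      simp only [Complex.mul_im, Complex.I_im, Complex.I_re, Complex.ofReal_re,
        Complex.ofReal_im, mul_one, mul_zero, zero_mul, add_zero]
      exact hα0
    have h2 : F (L ((Complex.I, 0) : ℂ × (Fin n → ℂ))) = F ((Complex.I, 0) : ℂ × (Fin n → ℂ)) := by
      rw [hLI]
      exact hGconst _ him
    intro v
    have h3 := DFunLike.congr_fun h1 v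
    rw [ContinuousLinearMap.comp_apply] at h3
    rw [h2] at h3
    exact h3
  set c : (ℂ × (Fin n → ℂ)) →L[ℂ] ℂ := F ((Complex.I, 0) : ℂ × (Fin n → ℂ)) with hcdef
  have hc1 : c ((1:ℂ), (0 : Fin n → ℂ)) = 0 := by
    have h := hcL ((1:ℂ), (0 : Fin n → ℂ))
    have hL1 : L ((1:ℂ), (0 : Fin n → ℂ)) = ((α:ℂ) • (((1:ℂ), (0 : Fin n → ℂ)) : ℂ × (Fin n → ℂ))) := by
      rw [hL]
      refine Prod.ext ?_ ?_
      · simp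
      · show Rᵀ.mulVec 0 = (α:ℂ) • (0 : Fin n → ℂ)
        simp
    rw [hL1, _root_.map_smul] at h
    have h4 : ((α:ℂ) - 1) * c ((1:ℂ), (0 : Fin n → ℂ)) = 0 := by
      have : (α:ℂ) * c ((1:ℂ), (0 : Fin n → ℂ)) = c ((1:ℂ), (0 : Fin n → ℂ)) := h
      ring_nf
      linear_combination this
    have h5 : ((α:ℂ) - 1) ≠ 0 := by
      intro hcontra
      apply hα1
      have := sub_eq_zero.mp hcontra
      exact_mod_cast this
    exact (mul_eq_zero.mp h4).resolve_left h5
  set d : Fin n → ℂ := fun j => c ((0:ℂ), Pi.single j 1) with hddef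
  have hexp : ∀ z : Fin n → ℂ, c ((0:ℂ), z) = ∑ j, z j * d j := by
    intro z
    have hzdecomp : (((0:ℂ), z) : ℂ × (Fin n → ℂ)) = ∑ j, z j • (((0:ℂ), Pi.single j 1) : ℂ × (Fin n → ℂ)) := by
      refine Prod.ext ?_ ?_
      · rw [Prod.fst_sum]
        simp
      · rw [Prod.snd_sum]
        simp only [Prod.smul_snd]
        funext k
        rw [Finset.sum_apply]
        simp only [Pi.smul_apply, Pi.single_apply, smul_eq_mul, mul_ite, mul_one, mul_zero]
        rw [Finset.sum_ite_eq Finset.univ k z]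
        simp
    rw [hzdecomp, map_sum]
    refine Finset.sum_congr rfl fun j _ => ?_
    rw [_root_.map_smul]
    simp [hddef]
  have hRd : R.mulVec d = d := by
    funext ℓ
    have h := hcL ((0:ℂ), Pi.single ℓ 1)
    have hLs : L ((0:ℂ), Pi.single ℓ 1) = ((0:ℂ), fun k => R ℓ k) := by
      rw [hL]
      refine Prod.ext (by simp) ?_
      show Rᵀ.mulVec (Pi.single ℓ 1) = _
      funext k
      simp [Matrix.mulVec, dotProduct, Pi.single_apply, mul_ite,
        Finset.sum_ite_eq' Finset.univ ℓ, Matrix.transpose_apply]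
    rw [hLs] at h
    have h1 : c ((0:ℂ), fun k => R ℓ k) = ∑ k, R ℓ k * d k := hexp (fun k => R ℓ k)
    have h2 : c ((0:ℂ), Pi.single ℓ 1) = d ℓ := rfl
    rw [h1, h2] at h
    simpa [Matrix.mulVec, dotProduct] using h
  have hR' : ∀ j, f (b j) = ∑ ℓ, R ℓ j • b ℓ := by
    intro j
    rw [hfdef]
    simpa [Matrix.mulVecLin_apply] using hR j
  have hd0 : d = 0 := inoue_R_no_fixed f β hβ b hbmem hbind R hR' d hRd
  have hc0 : c = 0 := by
    refine ContinuousLinearMap.ext fun v => ?_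
    have hsplit : (v : ℂ × (Fin n → ℂ)) = v.1 • (((1:ℂ), (0 : Fin n → ℂ)) : ℂ × (Fin n → ℂ))
        + (((0:ℂ), v.2) : ℂ × (Fin n → ℂ)) := by
      refine Prod.ext ?_ ?_ <;> simp
    rw [hsplit, map_add, _root_.map_smul, hc1, hexp v.2]
    simp [hd0]
  -- conclusion
  intro p hp
  have hp' : 0 < p.1.im := hp
  calc F p = F (p.1, p.2) := by rw [Prod.mk.eta]
    _ = F (p.1, 0) := hzind p.1 hp' p.2
    _ = F ((Complex.I, 0) : ℂ × (Fin n → ℂ)) := hGconst p.1 hp'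
    _ = 0 := hc0
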